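/- Convergence of SGDM with decreasing Demon-style momentum (Theorem 1): Let f be convex, continuously differentiable with L-Lipschitz gradient, minimized at θ* with f* = f(θ*). Let β_t = (1/t)·(t+1)/(t+2), α ∈ (0, 2/(3L)), and θ_{t+1} = θ_t - α·∇f(θ_t) + β_t·(θ_t - θ_{t-1}) for t ≥ 1 with θ_0 = θ_1. Then the Cesàro average θ̄_T = (1/T)·∑_{t=1}^T θ_t satisfies f(θ̄_T) - f* ≤ (‖θ_1 - θ*‖²/T)·(3L/4 + 1/(2α)). -/

import Mathlib

open RealInnerProductSpace Filter Topology

variable {p : ℕ}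

local notation "E" => EuclideanSpace ℝ (Fin p)

/-- convexity gradient inequality -/
theorem demon_convex_grad {f : E → ℝ} (hconv : ConvexOn ℝ Set.univ f)
    (hd : Differentiable ℝ f) (x y : E) :
    f x + ⟪gradient f x, y - x⟫ ≤ f y := by
  set v : E := y - x with hv
  have hgrad : HasGradientAt f (gradient f x) x := (hd x).hasGradientAt
  have hfd : HasFDerivAt f (InnerProductSpace.toDual ℝ E (gradient f x)) x :=
    hasGradientAt_iff_hasFDerivAt.1 hgrad
  have hline : HasDerivAt (fun s : ℝ => x + s • v) v 0 := by
    simpa using ((hasDerivAt_id (0:ℝ)).smul_const v).const_add x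
  have hcomp : HasDerivAt (fun s : ℝ => f (x + s • v)) ⟪gradient f x, v⟫ 0 := by
    have hfd' : HasFDerivAt f (InnerProductSpace.toDual ℝ E (gradient f x)) (x + (0:ℝ) • v) := by
      simpa using hfd
    have := hfd'.comp_hasDerivAt (0:ℝ) hline
    simpa [InnerProductSpace.toDual_apply_apply, Function.comp_def] using this
  -- slope bound
  have hslope : Filter.Tendsto (slope (fun s : ℝ => f (x + s • v)) 0) (𝓝[>] 0)
      (𝓝 ⟪gradient f x, v⟫) :=
    ((hasDerivAt_iff_tendsto_slope).1 hcomp).mono_left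
      (nhdsWithin_mono 0 (fun s hs => ne_of_gt hs))
  have hbound : ∀ᶠ s in 𝓝[>] (0:ℝ), slope (fun s : ℝ => f (x + s • v)) 0 s ≤ f y - f x := by
    filter_upwards [Ioo_mem_nhdsGT_of_mem (by norm_num : (0:ℝ) ∈ Set.Ico 0 1)] with s hs
    obtain ⟨hs0, hs1⟩ := hs
    have hcvx := hconv.2 (Set.mem_univ x) (Set.mem_univ y) (by linarith : (0:ℝ) ≤ 1 - s)
      (le_of_lt hs0) (by ring)
    have hxy : (1 - s) • x + s • y = x + s • v := by rw [hv]; module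
    rw [hxy] at hcvx
    rw [slope_def_field]
    have : (f (x + s • v) - f (x + (0:ℝ) • v)) / (s - 0) ≤ f y - f x := by
      rw [div_le_iff₀ (by linarith : (0:ℝ) < s - 0)]
      have h0 : x + (0:ℝ) • v = x := by simp
      rw [h0]
      simp only [smul_eq_mul] at hcvx
      nlinarith [hcvx]
    simpa using this
  have := le_of_tendsto hslope hbound
  linarith [this]

/-- L-smoothness quadratic upper bound -/
theorem demon_smooth_upper {f : E → ℝ} {L : ℝ} (hL : 0 < L)
    (hd : Differentiable ℝ f)
    (hlip : ∀ x y, ‖gradient f x - gradient f y‖ ≤ L * ‖x - y‖) (x y : E) :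
    f y ≤ f x + ⟪gradient f x, y - x⟫ + L / 2 * ‖y - x‖ ^ 2 := by
  set v : E := y - x with hv
  set φ : ℝ → ℝ := fun s => f (x + s • v) - s * ⟪gradient f x, v⟫ - L / 2 * s ^ 2 * ‖v‖ ^ 2
    with hφ
  have hderiv : ∀ s : ℝ, HasDerivAt φ
      (⟪gradient f (x + s • v), v⟫ - ⟪gradient f x, v⟫ - L * s * ‖v‖ ^ 2) s := by
    intro s
    have hline : HasDerivAt (fun s : ℝ => x + s • v) v s := by
      simpa using ((hasDerivAt_id s).smul_const v).const_add x
    have hfd : HasFDerivAt f (InnerProductSpace.toDual ℝ E (gradient f (x + s • v)))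
        (x + s • v) := hasGradientAt_iff_hasFDerivAt.1 (hd (x + s • v)).hasGradientAt
    have h1 : HasDerivAt (fun s : ℝ => f (x + s • v)) ⟪gradient f (x + s • v), v⟫ s := by
      have := hfd.comp_hasDerivAt s hline
      simpa [InnerProductSpace.toDual_apply_apply, Function.comp_def] using this
    have h2 : HasDerivAt (fun s : ℝ => s * ⟪gradient f x, v⟫) ⟪gradient f x, v⟫ s := by
      simpa using (hasDerivAt_id s).mul_const ⟪gradient f x, v⟫
    have h3 : HasDerivAt (fun s : ℝ => L / 2 * s ^ 2 * ‖v‖ ^ 2) (L * s * ‖v‖ ^ 2) s := by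
      have := ((hasDerivAt_pow 2 s).const_mul (L / 2)).mul_const (‖v‖ ^ 2)
      exact this.congr_deriv (by norm_num; left; ring)
    exact (h1.sub h2).sub h3
  have hmono : AntitoneOn φ (Set.Icc 0 1) := by
    apply antitoneOn_of_deriv_nonpos (convex_Icc (0:ℝ) 1)
    · have h1 : Continuous fun s : ℝ => x + s • v :=
        continuous_const.add (continuous_id.smul continuous_const)
      exact (((hd.continuous.comp h1).sub (continuous_id.mul continuous_const)).sub
        ((continuous_const.mul (continuous_pow 2)).mul continuous_const)).continuousOn
    · intro s _
      exact (hderiv s).differentiableAt.differentiableWithinAt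
    · intro s hs
      rw [interior_Icc] at hs
      rw [(hderiv s).deriv]
      have hb : ⟪gradient f (x + s • v) - gradient f x, v⟫ ≤ L * s * ‖v‖ ^ 2 := by
        calc ⟪gradient f (x + s • v) - gradient f x, v⟫
            ≤ ‖gradient f (x + s • v) - gradient f x‖ * ‖v‖ := real_inner_le_norm _ _
          _ ≤ (L * ‖(x + s • v) - x‖) * ‖v‖ := by
              apply mul_le_mul_of_nonneg_right (hlip _ _) (norm_nonneg _)
          _ = L * s * ‖v‖ ^ 2 := by
              have : (x + s • v) - x = s • v := by abel
              rw [this, norm_smul]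
              simp [abs_of_pos hs.1]
              ring
      rw [inner_sub_left] at hb
      linarith
  have h01 := hmono (Set.left_mem_Icc.2 (by norm_num)) (Set.right_mem_Icc.2 (by norm_num))
    (by norm_num : (0:ℝ) ≤ 1)
  have hx1 : x + v = y := by rw [hv]; abel
  have e0 : φ 0 = f x := by simp [hφ]
  have e1 : φ 1 = f y - ⟪gradient f x, v⟫ - L / 2 * ‖v‖ ^ 2 := by
    simp [hφ, one_smul, hx1]
  rw [e0, e1] at h01
  linarith

theorem demon_grad_min_zero {f : E → ℝ} (θstar : E)
    (hmin : ∀ x, f θstar ≤ f x) : gradient f θstar = 0 := by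
  have hlm : IsLocalMin f θstar := Filter.Eventually.of_forall hmin
  have := hlm.fderiv_eq_zero
  rw [gradient, this, map_zero]

theorem demon_key_ineq {f : E → ℝ} {L : ℝ} (hL : 0 < L)
    (hconv : ConvexOn ℝ Set.univ f) (hd : Differentiable ℝ f)
    (hlip : ∀ x y, ‖gradient f x - gradient f y‖ ≤ L * ‖x - y‖)
    (θstar : E) (hmin : ∀ x, f θstar ≤ f x) (x : E) :
    (f x - f θstar) + ‖gradient f x‖ ^ 2 / (2 * L) ≤ ⟪gradient f x, x - θstar⟫ := by
  set g : E := gradient f x with hg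
  set z : E := θstar + (1 / L) • g with hz
  have h1 : f z ≤ f θstar + ‖g‖ ^ 2 / (2 * L) := by
    have hq := demon_smooth_upper hL hd hlip θstar z
    rw [demon_grad_min_zero θstar hmin] at hq
    have hz' : z - θstar = (1 / L) • g := by rw [hz]; abel
    rw [hz', norm_smul] at hq
    simp only [inner_zero_left] at hq
    have habs : |(1 / L : ℝ)| = 1 / L := abs_of_pos (by positivity)
    rw [Real.norm_eq_abs, habs] at hq
    have hid : L / 2 * (1 / L * ‖g‖) ^ 2 = ‖g‖ ^ 2 / (2 * L) := by
      field_simp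
    linarith
  have h2 : f x + ⟪g, z - x⟫ ≤ f z := demon_convex_grad hconv hd x z
  have hz2 : z - x = (θstar - x) + (1 / L) • g := by rw [hz]; abel
  rw [hz2, inner_add_right, real_inner_smul_right, real_inner_self_eq_norm_sq] at h2
  have hinner : ⟪g, θstar - x⟫ = -⟪g, x - θstar⟫ := by
    rw [← inner_neg_right]; congr 1; abel
  rw [hinner] at h2
  have hgL : 1 / L * ‖g‖ ^ 2 - ‖g‖ ^ 2 / (2 * L) = ‖g‖ ^ 2 / (2 * L) := by
    field_simp; ring
  linarith


set_option maxHeartbeats 1000000 in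
/-- Theorem 1: Convergence of SGDM with decreasing Demon-style momentum
β_t = (1/t)·(t+1)/(t+2), constant step size α ∈ (0, 2/(3L)):
f(θ̄_T) - f* ≤ (‖θ_1 - θ*‖²/T)·(3L/4 + 1/(2α)). -/
theorem demon_sgdm_convergence {p : ℕ}
    (f : EuclideanSpace ℝ (Fin p) → ℝ) (L : ℝ) (hL : 0 < L)
    (hconv : ConvexOn ℝ Set.univ f) (hcd : ContDiff ℝ 1 f)
    (hlip : ∀ x y, ‖gradient f x - gradient f y‖ ≤ L * ‖x - y‖)
    (θstar : EuclideanSpace ℝ (Fin p)) (hmin : ∀ x, f θstar ≤ f x)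
    (α : ℝ) (hα0 : 0 < α) (hα1 : α < 2 / (3 * L))
    (θ : ℕ → EuclideanSpace ℝ (Fin p)) (h01 : θ 0 = θ 1)
    (hrec : ∀ t : ℕ, 1 ≤ t →
      θ (t + 1) = θ t - α • gradient f (θ t) +
        ((1 / (t : ℝ)) * (((t : ℝ) + 1) / ((t : ℝ) + 2))) • (θ t - θ (t - 1)))
    (T : ℕ) (hT : 1 ≤ T) :
    f ((1 / (T : ℝ)) • ∑ t ∈ Finset.Icc 1 T, θ t) - f θstar ≤
      ‖θ 1 - θstar‖ ^ 2 / (T : ℝ) * (3 / 4 * L + 1 / (2 * α)) := by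
  have hd : Differentiable ℝ f := hcd.differentiable one_ne_zero
  set Fv : ℕ → ℝ := fun t => f (θ t) - f θstar with hFv
  have hFnn : ∀ t, 0 ≤ Fv t := fun t => sub_nonneg.2 (hmin _)
  set y : ℕ → EuclideanSpace ℝ (Fin p) :=
    fun t => θ t + ((t : ℝ))⁻¹ • (θ t - θ (t - 1)) with hy
  have hy1 : y 1 = θ 1 := by
    simp [hy, ← h01]
  have hstep : ∀ t : ℕ, 1 ≤ t →
      y (t + 1) = y t - (α * ((t : ℝ) + 2) / ((t : ℝ) + 1)) • gradient f (θ t) := by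
    intro t ht
    have htR : (1 : ℝ) ≤ (t : ℝ) := by exact_mod_cast ht
    have h0 : (t : ℝ) ≠ 0 := by linarith
    have h1 : (t : ℝ) + 1 ≠ 0 := by linarith
    have h2 : (t : ℝ) + 2 ≠ 0 := by linarith
    simp only [hy, Nat.add_sub_cancel]
    rw [hrec t ht]
    push_cast
    match_scalars
    · field_simp
      ring
    · field_simp
      ring
    · field_simp
      ring
  set A : ℕ → ℝ := fun t => ‖y t - θstar‖ ^ 2 with hA
  set b : ℕ → ℝ := fun t => 2 * α * ((t : ℝ) + 2) / ((t : ℝ) * ((t : ℝ) + 1)) with hb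
  set Φ : ℕ → ℝ := fun t => A t + b t * Fv (t - 1) with hΦ
  clear_value Fv y A b Φ
  have hstep2 : ∀ t : ℕ, 1 ≤ t → 2 * α * Fv t ≤ Φ t - Φ (t + 1) := by
    intro t ht
    have htR : (1 : ℝ) ≤ (t : ℝ) := by exact_mod_cast ht
    have h0 : (0:ℝ) < (t : ℝ) := by linarith
    have h1 : (0:ℝ) < (t : ℝ) + 1 := by linarith
    have h2 : (0:ℝ) < (t : ℝ) + 2 := by linarith
    set at' : ℝ := α * ((t : ℝ) + 2) / ((t : ℝ) + 1) with hat
    have hat_pos : 0 < at' := by positivity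
    have hat_ge : α ≤ at' := by
      rw [hat, le_div_iff₀ h1]
      nlinarith
    have hat_le : at' ≤ 3 / 2 * α := by
      rw [hat, div_le_iff₀ h1]
      nlinarith
    have hLinv : at' ≤ 1 / L := by
      have haL : α * L < 2 / 3 := by
        have h' : α < 2 / (3 * L) := hα1
        rw [lt_div_iff₀ (by positivity)] at h'
        nlinarith
      rw [hat, div_le_div_iff₀ h1 hL]
      nlinarith [mul_pos (show (0:ℝ) < 2/3 - α*L by linarith) h2]
    set G : ℝ := ‖gradient f (θ t)‖ ^ 2 with hG
    have hGnn : 0 ≤ G := by positivity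
    -- expansion of A (t+1)
    have hexp : A (t + 1) =
        A t - 2 * at' * ⟪gradient f (θ t), y t - θstar⟫ + at' ^ 2 * G := by
      simp only [hA]
      rw [hstep t ht]
      have : y t - at' • gradient f (θ t) - θstar
          = (y t - θstar) - at' • gradient f (θ t) := by abel
      rw [this, norm_sub_sq_real, real_inner_smul_right, norm_smul]
      rw [Real.norm_eq_abs, abs_of_pos hat_pos]
      rw [real_inner_comm]
      ring
    -- inner product lower bound
    have hsplit : y t - θstar =
        (θ t - θstar) + ((t : ℝ))⁻¹ • (θ t - θ (t - 1)) := by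
      simp only [hy]; abel
    have hI1 : Fv t + G / (2 * L) ≤ ⟪gradient f (θ t), θ t - θstar⟫ := by
      rw [hFv, hG]
      exact demon_key_ineq hL hconv hd hlip θstar hmin (θ t)
    have hI2 : Fv t - Fv (t - 1) ≤ ⟪gradient f (θ t), θ t - θ (t - 1)⟫ := by
      have := demon_convex_grad hconv hd (θ t) (θ (t - 1))
      have hneg : θ (t - 1) - θ t = -(θ t - θ (t - 1)) := by abel
      rw [hneg, inner_neg_right] at this
      simp only [hFv]
      linarith
    have hIlow : Fv t + G / (2 * L) + ((t : ℝ))⁻¹ * (Fv t - Fv (t - 1))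
        ≤ ⟪gradient f (θ t), y t - θstar⟫ := by
      rw [hsplit, inner_add_right, real_inner_smul_right]
      have h3 : ((t : ℝ))⁻¹ * (Fv t - Fv (t - 1))
          ≤ ((t : ℝ))⁻¹ * ⟪gradient f (θ t), θ t - θ (t - 1)⟫ :=
        mul_le_mul_of_nonneg_left hI2 (by positivity)
      linarith
    -- b relations
    have hbt : b t = 2 * at' * ((t : ℝ))⁻¹ := by
      rw [hb, hat]
      field_simp
    have hbdec : b (t + 1) ≤ b t := by
      simp only [hb]
      push_cast
      rw [div_le_div_iff₀ (by positivity) (by positivity)]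
      nlinarith [mul_pos (mul_pos hα0 h1) (show (0:ℝ) < (t:ℝ) + 4 by linarith)]
    have hbnn : 0 ≤ b (t + 1) := by
      simp only [hb]
      positivity
    -- combine
    have hsq : at' ^ 2 * G ≤ at' * (1 / L) * G := by
      have : at' ^ 2 ≤ at' * (1 / L) := by nlinarith
      exact mul_le_mul_of_nonneg_right this hGnn
    clear_value at' G
    have hmain : A (t + 1) ≤ A t - 2 * at' * Fv t - b t * (Fv t - Fv (t - 1)) := by
      rw [hexp]
      have h4 : 2 * at' * (Fv t + G / (2 * L) + ((t : ℝ))⁻¹ * (Fv t - Fv (t - 1)))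
          ≤ 2 * at' * ⟪gradient f (θ t), y t - θstar⟫ :=
        mul_le_mul_of_nonneg_left hIlow (by positivity)
      have h5 : 2 * at' * (G / (2 * L)) = at' * (1 / L) * G := by
        field_simp
      have h6 : 2 * at' * (((t : ℝ))⁻¹ * (Fv t - Fv (t - 1)))
          = b t * (Fv t - Fv (t - 1)) := by rw [hbt]; ring
      linarith [h4, h5, h6, hsq]
    have hΦt : Φ t = A t + b t * Fv (t - 1) := by simp only [hΦ]
    have hΦt1 : Φ (t + 1) = A (t + 1) + b (t + 1) * Fv t := by
      simp only [hΦ, Nat.add_sub_cancel]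
    rw [hΦt, hΦt1]
    have h7 : b (t + 1) * Fv t ≤ b t * Fv t :=
      mul_le_mul_of_nonneg_right hbdec (hFnn t)
    have h8 : 2 * α * Fv t ≤ 2 * at' * Fv t := by
      apply mul_le_mul_of_nonneg_right _ (hFnn t)
      linarith
    linarith
  -- telescoping
  have htel : ∀ n : ℕ, 1 ≤ n →
      2 * α * (∑ t ∈ Finset.Icc 1 n, Fv t) ≤ Φ 1 - Φ (n + 1) := by
    intro n hn
    induction n, hn using Nat.le_induction with
    | base => simpa using hstep2 1 le_rfl
    | succ n hn ih =>
      rw [Finset.sum_Icc_succ_top (by omega : 1 ≤ n + 1), mul_add]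
      have := hstep2 (n + 1) (by omega)
      linarith
  have hΦnn : 0 ≤ Φ (T + 1) := by
    simp only [hΦ, hA, hb, Nat.add_sub_cancel]
    have h1 : (0:ℝ) ≤ ‖y (T+1) - θstar‖ ^ 2 := by positivity
    have h2 : (0:ℝ) ≤ 2 * α * ((T+1 : ℕ) + 2 : ℝ) / (((T+1 : ℕ) : ℝ) * (((T+1:ℕ) : ℝ) + 1)) := by
      positivity
    exact add_nonneg h1 (mul_nonneg h2 (hFnn T))
  have hF1 : Fv 1 ≤ L / 2 * ‖θ 1 - θstar‖ ^ 2 := by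
    have hq := demon_smooth_upper hL hd hlip θstar (θ 1)
    rw [demon_grad_min_zero θstar hmin] at hq
    simp only [inner_zero_left] at hq
    simp only [hFv]
    linarith
  have hΦ1 : Φ 1 ≤ (1 + 3 * α * L / 2) * ‖θ 1 - θstar‖ ^ 2 := by
    have e1 : Φ 1 = A 1 + b 1 * Fv 0 := by simp only [hΦ]
    have e2 : A 1 = ‖θ 1 - θstar‖ ^ 2 := by simp only [hA]; rw [hy1]
    have e3 : b 1 = 3 * α := by simp only [hb]; norm_num; ring
    have e4 : Fv 0 = Fv 1 := by simp only [hFv, h01]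
    rw [e1, e2, e3, e4]
    nlinarith [hF1, hα0]
  have hTR : (0:ℝ) < (T : ℝ) := by
    have : (1:ℝ) ≤ (T:ℝ) := by exact_mod_cast hT
    linarith
  have hsum : ∑ t ∈ Finset.Icc 1 T, Fv t ≤
      ‖θ 1 - θstar‖ ^ 2 * (3 / 4 * L + 1 / (2 * α)) := by
    have h2α : (0:ℝ) < 2 * α := by linarith
    rw [← mul_le_mul_iff_right₀ h2α]
    calc 2 * α * ∑ t ∈ Finset.Icc 1 T, Fv t
        ≤ Φ 1 - Φ (T + 1) := htel T hT
      _ ≤ (1 + 3 * α * L / 2) * ‖θ 1 - θstar‖ ^ 2 := by linarith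
      _ = 2 * α * (‖θ 1 - θstar‖ ^ 2 * (3 / 4 * L + 1 / (2 * α))) := by
          field_simp
          ring
  -- Jensen
  have hjen : f ((1 / (T : ℝ)) • ∑ t ∈ Finset.Icc 1 T, θ t) ≤
      ∑ t ∈ Finset.Icc 1 T, (1 / (T : ℝ)) * f (θ t) := by
    have hw : ∑ _t ∈ Finset.Icc 1 T, (1 / (T : ℝ)) = 1 := by
      rw [Finset.sum_const, Nat.card_Icc, Nat.add_sub_cancel, nsmul_eq_mul]
      field_simp
    have hj := hconv.map_sum_le (fun i _ => by positivity) hw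
      (fun i _ => Set.mem_univ (θ i))
    rw [Finset.smul_sum]
    exact hj
  have hfinal : f ((1 / (T : ℝ)) • ∑ t ∈ Finset.Icc 1 T, θ t) - f θstar ≤
      (1 / (T : ℝ)) * ∑ t ∈ Finset.Icc 1 T, Fv t := by
    have h1 : (1 / (T : ℝ)) * ∑ t ∈ Finset.Icc 1 T, Fv t =
        (∑ t ∈ Finset.Icc 1 T, (1 / (T : ℝ)) * f (θ t)) - f θstar := by
      simp only [hFv]
      rw [Finset.mul_sum]
      have hc : ∀ t ∈ Finset.Icc 1 T, (1/(T:ℝ)) * (f (θ t) - f θstar)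
          = (1/(T:ℝ)) * f (θ t) - (1/(T:ℝ)) * f θstar := fun t _ => by ring
      rw [Finset.sum_congr rfl hc, Finset.sum_sub_distrib, Finset.sum_const,
        Nat.card_Icc, Nat.add_sub_cancel, nsmul_eq_mul]
      have hTf : (T:ℝ) * ((1/(T:ℝ)) * f θstar) = f θstar := by field_simp
      rw [hTf]
    linarith [hjen]
  calc f ((1 / (T : ℝ)) • ∑ t ∈ Finset.Icc 1 T, θ t) - f θstar
      ≤ (1 / (T : ℝ)) * ∑ t ∈ Finset.Icc 1 T, Fv t := hfinal
    _ ≤ (1 / (T : ℝ)) * (‖θ 1 - θstar‖ ^ 2 * (3 / 4 * L + 1 / (2 * α))) := by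
        apply mul_le_mul_of_nonneg_left hsum (by positivity)
    _ = ‖θ 1 - θstar‖ ^ 2 / (T : ℝ) * (3 / 4 * L + 1 / (2 * α)) := by
        ring
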